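/- Let S be an n×n real positive semidefinite matrix written in block form S = [[A, B], [Bᵀ, C]] with A an m×m block, and let Ŝ = [[A],[Bᵀ]] A† [A, B] be its Nyström approximation. Then S − Ŝ = [[0, 0], [0, C − Bᵀ A† B]]; in particular S − Ŝ is positive semidefinite, so the Nyström approximation satisfies Ŝ ⪯ S and Ŝ is itself positive semidefinite. -/

import Mathlib

open Matrix

/-- `Ad` is the Moore–Penrose inverse of `A`: the Penrose equations
`A Ad A = A`, `Ad A Ad = Ad`, `(A Ad)ᵀ = A Ad`, `(Ad A)ᵀ = Ad A`. -/
def IsMoorePenroseInv {m n : ℕ} (A : Matrix (Fin m) (Fin n) ℝ)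
    (Ad : Matrix (Fin n) (Fin m) ℝ) : Prop :=
  A * Ad * A = A ∧ Ad * A * Ad = Ad ∧ (A * Ad)ᵀ = A * Ad ∧ (Ad * A)ᵀ = Ad * A

/-- Over `ℝ`, conjugate transpose is just transpose. -/
lemma ctr {a b : Type*} (X : Matrix a b ℝ) : Xᴴ = Xᵀ := by
  ext i j; simp [Matrix.conjTranspose_apply]

/-- Subtraction of block matrices. -/
lemma fromBlocks_sub' {n₁ n₂ m₁ m₂ : Type*}
    (A A' : Matrix n₁ m₁ ℝ) (B B' : Matrix n₁ m₂ ℝ)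
    (C C' : Matrix n₂ m₁ ℝ) (D D' : Matrix n₂ m₂ ℝ) :
    Matrix.fromBlocks A B C D - Matrix.fromBlocks A' B' C' D' =
      Matrix.fromBlocks (A - A') (B - B') (C - C') (D - D') := by
  ext (i | i) (j | j) <;> simp [Matrix.fromBlocks]

/-- For a positive semidefinite `S = [[A, B], [Bᵀ, C]]` with Nyström
approximation `Ŝ = [[A],[Bᵀ]] A† [A, B]`, one has
`S - Ŝ = [[0,0],[0, C - Bᵀ A† B]]`; in particular `S - Ŝ` is positive semidefinite
(so `Ŝ ⪯ S`) and `Ŝ` is itself positive semidefinite. -/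
theorem nystrom_approximation_residual {m p : ℕ}
    (A Ad : Matrix (Fin m) (Fin m) ℝ)
    (B : Matrix (Fin m) (Fin p) ℝ) (C : Matrix (Fin p) (Fin p) ℝ)
    (hS : (Matrix.fromBlocks A B Bᵀ C).PosSemidef)
    (hMP : IsMoorePenroseInv A Ad) :
    Matrix.fromBlocks A B Bᵀ C -
        Matrix.fromBlocks (A * Ad * A) (A * Ad * B) (Bᵀ * Ad * A) (Bᵀ * Ad * B) =
      Matrix.fromBlocks 0 0 0 (C - Bᵀ * Ad * B) ∧
    (Matrix.fromBlocks A B Bᵀ C -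
        Matrix.fromBlocks (A * Ad * A) (A * Ad * B) (Bᵀ * Ad * A) (Bᵀ * Ad * B)).PosSemidef ∧
    (Matrix.fromBlocks (A * Ad * A) (A * Ad * B) (Bᵀ * Ad * A) (Bᵀ * Ad * B)).PosSemidef := by
  obtain ⟨hAAdA, hAdAAd, hAAd, hAdA⟩ := hMP
  -- A is symmetric
  have hAsym : Aᵀ = A := by
    have h : (Matrix.fromBlocks A B Bᵀ C)ᴴ = Matrix.fromBlocks A B Bᵀ C := hS.isHermitian
    rw [ctr] at h
    ext i j
    have := congrFun (congrFun h (Sum.inl i)) (Sum.inl j)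
    simpa [Matrix.fromBlocks] using this
  -- factor S = Lᴴ L
  obtain ⟨L, hL⟩ : ∃ L : Matrix (Fin m ⊕ Fin p) (Fin m ⊕ Fin p) ℝ,
      Matrix.fromBlocks A B Bᵀ C = Lᴴ * L := by
    open scoped MatrixOrder in
    exact CStarAlgebra.nonneg_iff_eq_star_mul_self.mp hS.nonneg
  set L₁ : Matrix (Fin m ⊕ Fin p) (Fin m) ℝ := L.submatrix id Sum.inl with hL₁
  set L₂ : Matrix (Fin m ⊕ Fin p) (Fin p) ℝ := L.submatrix id Sum.inr with hL₂
  have hA : A = L₁ᵀ * L₁ := by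
    ext i j
    have h := congrFun (congrFun hL (Sum.inl i)) (Sum.inl j)
    simpa [Matrix.mul_apply, Matrix.conjTranspose_apply, Matrix.fromBlocks, hL₁] using h
  have hB : B = L₁ᵀ * L₂ := by
    ext i j
    have h := congrFun (congrFun hL (Sum.inl i)) (Sum.inr j)
    simpa [Matrix.mul_apply, Matrix.conjTranspose_apply, Matrix.fromBlocks, hL₁, hL₂] using h
  -- the kernel of A is contained in the kernel of Bᵀ
  have key : ∀ M : Matrix (Fin m) (Fin m) ℝ, A * M = 0 → Bᵀ * M = 0 := by
    intro M hM
    have h1 : (L₁ * M)ᵀ * (L₁ * M) = 0 := by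
      rw [Matrix.transpose_mul, Matrix.mul_assoc, ← Matrix.mul_assoc L₁ᵀ, ← hA, hM,
        Matrix.mul_zero]
    have h2 : L₁ * M = 0 :=
      Matrix.conjTranspose_mul_self_eq_zero.mp (by rw [ctr]; exact h1)
    rw [hB, Matrix.transpose_mul, Matrix.transpose_transpose, Matrix.mul_assoc, h2,
      Matrix.mul_zero]
  -- consequences: Bᵀ Ad A = Bᵀ, A Ad B = B, etc.
  have hBAdA : Bᵀ * (Ad * A) = Bᵀ := by
    have h := key (1 - Ad * A) (by rw [Matrix.mul_sub, Matrix.mul_one, ← Matrix.mul_assoc,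
      hAAdA, sub_self])
    rw [Matrix.mul_sub, Matrix.mul_one, sub_eq_zero] at h
    exact h.symm
  have hAAAd : A * (A * Ad) = A := by
    have h : A * (A * Ad) = ((A * Ad)ᵀ * Aᵀ)ᵀ := by
      rw [Matrix.transpose_mul, Matrix.transpose_transpose, Matrix.transpose_transpose]
    rw [h, hAAd, hAsym, hAAdA, hAsym]
  have hBtAAd : Bᵀ * (A * Ad) = Bᵀ := by
    have h := key (1 - A * Ad) (by rw [Matrix.mul_sub, Matrix.mul_one, hAAAd, sub_self])
    rw [Matrix.mul_sub, Matrix.mul_one, sub_eq_zero] at h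
    exact h.symm
  have hAAdB : A * Ad * B = B := by
    have h := congrArg Matrix.transpose hBtAAd
    rwa [Matrix.transpose_mul, hAAd, Matrix.transpose_transpose] at h
  have hAdtA : Adᵀ * A = A * Ad := by
    calc Adᵀ * A = Adᵀ * Aᵀ := by rw [hAsym]
      _ = (A * Ad)ᵀ := (Matrix.transpose_mul A Ad).symm
      _ = A * Ad := hAAd
  have hBtAdtA : Bᵀ * Adᵀ * A = Bᵀ := by
    rw [Matrix.mul_assoc, hAdtA, hBtAAd]
  have hBtAdtB : Bᵀ * Adᵀ * B = Bᵀ * Ad * B := by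
    calc Bᵀ * Adᵀ * B = Bᵀ * Adᵀ * (A * Ad * B) := by rw [hAAdB]
      _ = (Bᵀ * Adᵀ * A) * (Ad * B) := by
          simp only [Matrix.mul_assoc]
      _ = Bᵀ * Ad * B := by rw [hBtAdtA, Matrix.mul_assoc]
  have hBAdA' : Bᵀ * Ad * A = Bᵀ := by rw [Matrix.mul_assoc]; exact hBAdA
  -- Goal 1: the residual identity
  have goal1 : Matrix.fromBlocks A B Bᵀ C -
      Matrix.fromBlocks (A * Ad * A) (A * Ad * B) (Bᵀ * Ad * A) (Bᵀ * Ad * B) =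
      Matrix.fromBlocks 0 0 0 (C - Bᵀ * Ad * B) := by
    rw [fromBlocks_sub', hAAdA, hAAdB, hBAdA', sub_self, sub_self, sub_self]
  refine ⟨goal1, ?_, ?_⟩
  -- Goal 2: residual is PSD, as Xᴴ S X
  · rw [goal1]
    have e2 : (Matrix.fromBlocks (0 : Matrix (Fin m) (Fin m) ℝ) (-(Ad * B))
          (0 : Matrix (Fin p) (Fin m) ℝ) (1 : Matrix (Fin p) (Fin p) ℝ))ᴴ *
        Matrix.fromBlocks A B Bᵀ C *
        Matrix.fromBlocks (0 : Matrix (Fin m) (Fin m) ℝ) (-(Ad * B))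
          (0 : Matrix (Fin p) (Fin m) ℝ) (1 : Matrix (Fin p) (Fin p) ℝ) =
        Matrix.fromBlocks 0 0 0 (C - Bᵀ * Ad * B) := by
      rw [ctr, Matrix.fromBlocks_transpose, Matrix.fromBlocks_multiply,
        Matrix.fromBlocks_multiply]
      simp [Matrix.mul_assoc, hBtAdtA, hBtAdtB,
        Matrix.transpose_neg, Matrix.transpose_mul]
      abel
    rw [← e2]
    exact hS.conjTranspose_mul_mul_same _
  -- Goal 3: Nyström approximation is PSD, as Zᴴ S Z
  · have e3 : (Matrix.fromBlocks (1 : Matrix (Fin m) (Fin m) ℝ) (Ad * B)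
          (0 : Matrix (Fin p) (Fin m) ℝ) (0 : Matrix (Fin p) (Fin p) ℝ))ᴴ *
        Matrix.fromBlocks A B Bᵀ C *
        Matrix.fromBlocks (1 : Matrix (Fin m) (Fin m) ℝ) (Ad * B)
          (0 : Matrix (Fin p) (Fin m) ℝ) (0 : Matrix (Fin p) (Fin p) ℝ) =
        Matrix.fromBlocks (A * Ad * A) (A * Ad * B) (Bᵀ * Ad * A) (Bᵀ * Ad * B) := by
      rw [ctr, Matrix.fromBlocks_transpose, Matrix.fromBlocks_multiply,
        Matrix.fromBlocks_multiply]
      simp only [Matrix.transpose_one, Matrix.transpose_zero, Matrix.one_mul, Matrix.zero_mul,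
        Matrix.mul_zero, add_zero, zero_add, Matrix.mul_one]
      have bl : (Ad * B)ᵀ * A = Bᵀ * Ad * A := by
        rw [Matrix.transpose_mul, hBtAdtA, hBAdA']
      have br : (Ad * B)ᵀ * A * (Ad * B) = Bᵀ * Ad * B := by
        rw [Matrix.transpose_mul, hBtAdtA, ← Matrix.mul_assoc]
      have tr : A * (Ad * B) = A * Ad * B := (Matrix.mul_assoc A Ad B).symm
      rw [br, bl, tr, hAAdA]
    rw [← e3]
    exact hS.conjTranspose_mul_mul_same _
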